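/- Let d ≥ 3 be the code distance of the polynomial remainder code with moduli m_1(x), …, m_L(x), and let λ be a nonnegative integer with λ < τ_{(L − 2⌊(d−1)/2⌋)}. Let a(x), b(x) ∈ F[x] with deg(a) < deg(M) and deg(b) < deg(M), and let ã_i(x) (1 ≤ i ≤ L) satisfy deg(ã_i) < deg(m_i); set e_i(x) = ã_i(x) − [a]_{m_i}(x) and f_i(x) = ã_i(x) − [b]_{m_i}(x). If the number of indices i with deg(e_i) > λ is at most ⌊(d−1)/2⌋ and the number of indices i with deg(f_i) > λ is at most ⌊(d−1)/2⌋, then deg(a − b) ≤ λ. (Robust reconstruction holds when at most ⌊(d−1)/2⌋ unrestricted residue errors and arbitrarily many residue errors of degree at most λ occur: the received residues determine the transmitted polynomial up to an error of degree at most λ.) -/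

import Mathlib

open Polynomial
open scoped Classical

/-- The code distance of the polynomial remainder code with moduli `m i`, `i ∈ s`. -/
noncomputable def codeDist {F : Type*} [Field F] {ι : Type*} (s : Finset ι)
    (m : ι → Polynomial F) : ℕ :=
  sInf {k | ∃ a : Polynomial F, a ≠ 0 ∧ a.degree < (s.lcm m).degree ∧
    (s.filter fun i => ¬ m i ∣ a).card = k}

/-- The `j`-th smallest element (1-indexed) of a multiset of natural numbers. -/
noncomputable def nthSmallest (s : Multiset ℕ) (j : ℕ) : ℕ :=
  (s.sort (· ≤ ·)).getD (j - 1) 0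

/-- Helper: if the `(c+1)`-th smallest element of a multiset of size `L` exceeds `lam`,
then more than `L - (c+1)` elements exceed `lam`. -/
lemma count_gt_of_nthSmallest {s : Multiset ℕ} {L c lam : ℕ}
    (hcard : Multiset.card s = L) (hc : c + 1 ≤ L)
    (h : lam < nthSmallest s (c + 1)) :
    L - c ≤ Multiset.countP (fun n => lam < n) s := by
  classical
  set l := s.sort (· ≤ ·) with hl
  have hlen : l.length = L := by rw [hl, Multiset.length_sort]; exact hcard
  have hsorted : l.Pairwise (· ≤ ·) := Multiset.pairwise_sort _ _
  have hn0 : c < l.length := by omega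
  have hval : lam < l[c] := by
    have : nthSmallest s (c + 1) = l.getD c 0 := by
      simp [nthSmallest, hl]
    rw [this, List.getD_eq_getElem l 0 hn0] at h
    exact h
  -- every element of `l.drop c` exceeds `lam`
  have hdrop : ∀ x ∈ l.drop c, lam < x := by
    have hds : (l.drop c).Pairwise (· ≤ ·) := hsorted.drop
    rw [List.drop_eq_getElem_cons hn0] at hds ⊢
    intro x hx
    rcases List.mem_cons.mp hx with h' | h'
    · rw [h']; exact hval
    · exact lt_of_lt_of_le hval ((List.pairwise_cons.mp hds).1 x h')
  have hcount : Multiset.countP (fun n => lam < n) s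
      = l.countP (fun n => decide (lam < n)) := by
    conv_lhs => rw [← Multiset.sort_eq s (· ≤ ·), ← hl]
    simp [Multiset.coe_countP]
  rw [hcount]
  have hsplit : l.countP (fun n => decide (lam < n))
      = (l.take c).countP (fun n => decide (lam < n))
        + (l.drop c).countP (fun n => decide (lam < n)) := by
    rw [← List.countP_append, List.take_append_drop]
  have hdropfull : (l.drop c).countP (fun n => decide (lam < n)) = (l.drop c).length :=
    List.countP_eq_length.mpr (fun x hx => by simpa using hdrop x hx)
  have hdlen : (l.drop c).length = L - c := by rw [List.length_drop, hlen]
  omega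

/-- robust reconstruction under at most `⌊(d−1)/2⌋` unrestricted
residue errors and arbitrarily many residue errors of degree at most `λ`, where
`λ < τ_{(L − 2⌊(d−1)/2⌋)}`: any two polynomials `a, b` of degree less than `deg M`
consistent with the received residues in this way satisfy `deg(a − b) ≤ λ`. -/
theorem stmt10 {F : Type*} [Field F] {L : ℕ} (hL : 2 ≤ L)
    (m : Fin L → Polynomial F)
    (hmonic : ∀ i, (m i).Monic)
    (hdist : Function.Injective m)
    (hdeg : ∀ i, 0 < (m i).degree)
    (hm_lt : ∀ i, (m i).degree < (Finset.univ.lcm m).degree)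
    (d : ℕ) (hd : d = codeDist Finset.univ m) (hd3 : 3 ≤ d)
    (tau : Fin L → ℕ)
    (htau : ∀ j, tau j = sInf {n | ∃ i, i ≠ j ∧ n = (gcd (m i) (m j)).natDegree})
    (lam : ℕ)
    (hlam : lam < nthSmallest (Finset.univ.val.map tau) (L - 2 * ((d - 1) / 2)))
    (a b : Polynomial F)
    (ha : a.degree < (Finset.univ.lcm m).degree)
    (hb : b.degree < (Finset.univ.lcm m).degree)
    (r : Fin L → Polynomial F)
    (hr : ∀ i, (r i).degree < (m i).degree)
    (e f : Fin L → Polynomial F)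
    (he : ∀ i, e i = r i - a %ₘ m i)
    (hf : ∀ i, f i = r i - b %ₘ m i)
    (hecount : (Finset.univ.filter fun i =>
      (lam : WithBot ℕ) < (e i).degree).card ≤ (d - 1) / 2)
    (hfcount : (Finset.univ.filter fun i =>
      (lam : WithBot ℕ) < (f i).degree).card ≤ (d - 1) / 2) :
    (a - b).degree ≤ (lam : WithBot ℕ) := by
  classical
  have hmne : ∀ i, m i ≠ 0 := fun i => (hmonic i).ne_zero
  set t : ℕ := (d - 1) / 2 with ht
  -- d ≤ L
  have hdL : d ≤ L := by
    have hMpos : (0 : WithBot ℕ) < (Finset.univ.lcm m).degree :=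
      lt_trans (hdeg ⟨0, by omega⟩) (hm_lt ⟨0, by omega⟩)
    have hmem : L ∈ {k | ∃ a : Polynomial F, a ≠ 0 ∧
        a.degree < (Finset.univ.lcm m).degree ∧
        (Finset.univ.filter fun i => ¬ m i ∣ a).card = k} := by
      refine ⟨1, one_ne_zero, by simpa using hMpos, ?_⟩
      rw [Finset.filter_true_of_mem, Finset.card_univ, Fintype.card_fin]
      intro i _ hdvd
      have h0 : (m i).degree = 0 := degree_eq_zero_of_isUnit (isUnit_of_dvd_one hdvd)
      exact absurd (hdeg i) (by simp [h0])
    rw [hd]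
    exact Nat.sInf_le hmem
  have h2t : 2 * t ≤ d - 1 := by
    rw [ht, Nat.mul_comm]; exact Nat.div_mul_le_self _ _
  have hLt : 2 * t + 1 ≤ L := by omega
  -- there are at least 2t+1 indices with lam < tau j
  have hT : 2 * t + 1 ≤ (Finset.univ.filter fun j => lam < tau j).card := by
    have hcard : Multiset.card (Finset.univ.val.map tau) = L := by simp
    have hc : (L - 2 * t - 1) + 1 ≤ L := by omega
    have h' : lam < nthSmallest (Finset.univ.val.map tau) ((L - 2 * t - 1) + 1) := by
      have : (L - 2 * t - 1) + 1 = L - 2 * t := by omega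
      rw [this]; exact hlam
    have hcnt := count_gt_of_nthSmallest hcard hc h'
    have heq : (Finset.univ.filter fun j => lam < tau j).card
        = Multiset.countP (fun n => lam < n) (Finset.univ.val.map tau) := by
      rw [Multiset.countP_map]
      rfl
    omega
  -- the bad set B
  set B : Finset (Fin L) :=
      (Finset.univ.filter fun i => (lam : WithBot ℕ) < (e i).degree) ∪
      (Finset.univ.filter fun i => (lam : WithBot ℕ) < (f i).degree) with hB
  have hBcard : B.card ≤ 2 * t := by
    calc B.card ≤ _ + _ := Finset.card_union_le _ _
      _ ≤ t + t := add_le_add hecount hfcount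
      _ = 2 * t := by omega
  -- find good j with lam < tau j
  obtain ⟨j, hj1, hj2⟩ : ∃ j, lam < tau j ∧ j ∉ B := by
    by_contra hcon
    push_neg at hcon
    have hsub : (Finset.univ.filter fun j => lam < tau j) ⊆ B := fun j hj =>
      hcon j (Finset.mem_filter.mp hj).2
    have := Finset.card_le_card hsub
    omega
  -- key facts about good indices
  have hgood : ∀ i, i ∉ B →
      (f i - e i).degree ≤ (lam : WithBot ℕ) ∧ m i ∣ (a - b) - (f i - e i) := by
    intro i hi
    rw [hB, Finset.mem_union] at hi
    push_neg at hi
    obtain ⟨hie, hif⟩ := hi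
    rw [Finset.mem_filter] at hie hif
    have hie' : (e i).degree ≤ (lam : WithBot ℕ) :=
      not_lt.mp (fun hc => hie ⟨Finset.mem_univ i, hc⟩)
    have hif' : (f i).degree ≤ (lam : WithBot ℕ) :=
      not_lt.mp (fun hc => hif ⟨Finset.mem_univ i, hc⟩)
    constructor
    · exact le_trans (degree_sub_le _ _) (max_le hif' hie')
    · have h1 : m i ∣ a - a %ₘ m i := by
        refine ⟨a /ₘ m i, ?_⟩
        have hm := modByMonic_add_div a (m i)
        nth_rewrite 1 [← hm]; ring
      have h2 : m i ∣ b - b %ₘ m i := by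
        refine ⟨b /ₘ m i, ?_⟩
        have hm := modByMonic_add_div b (m i)
        nth_rewrite 1 [← hm]; ring
      have hfe : (a - b) - (f i - e i) = (a - a %ₘ m i) - (b - b %ₘ m i) := by
        rw [he i, hf i]; ring
      rw [hfe]
      exact dvd_sub h1 h2
  set ρ : Polynomial F := f j - e j with hρ
  have hρdeg : ρ.degree ≤ (lam : WithBot ℕ) := (hgood j hj2).1
  have hρj : m j ∣ (a - b) - ρ := (hgood j hj2).2
  -- for every i ≠ j, lam < natDegree (gcd (m i) (m j))
  have htauj : ∀ i, i ≠ j → lam < (gcd (m i) (m j)).natDegree := by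
    intro i hij
    refine lt_of_lt_of_le hj1 ?_
    rw [htau j]
    exact Nat.sInf_le ⟨i, hij, rfl⟩
  -- all good indices divide (a - b) - ρ
  have hdvdall : ∀ i, i ∉ B → m i ∣ (a - b) - ρ := by
    intro i hi
    by_cases hij : i = j
    · rw [hij]; exact hρj
    · obtain ⟨hideg, hidvd⟩ := hgood i hi
      have hgcd1 : gcd (m i) (m j) ∣ (a - b) - (f i - e i) :=
        dvd_trans (gcd_dvd_left _ _) hidvd
      have hgcd2 : gcd (m i) (m j) ∣ (a - b) - ρ :=
        dvd_trans (gcd_dvd_right _ _) hρj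
      have hgcd3 : gcd (m i) (m j) ∣ (f i - e i) - ρ := by
        have : (f i - e i) - ρ = ((a - b) - ρ) - ((a - b) - (f i - e i)) := by ring
        rw [this]; exact dvd_sub hgcd2 hgcd1
      have hgne : gcd (m i) (m j) ≠ 0 := by
        intro hzero
        exact hmne j ((gcd_eq_zero_iff _ _).mp hzero).2
      have hdeglt : ((f i - e i) - ρ).degree < (gcd (m i) (m j)).degree := by
        have h1 : ((f i - e i) - ρ).degree ≤ (lam : WithBot ℕ) :=
          le_trans (degree_sub_le _ _) (max_le hideg hρdeg)
        have h2 : (lam : WithBot ℕ) < (gcd (m i) (m j)).degree := by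
          rw [degree_eq_natDegree hgne]
          exact_mod_cast htauj i hij
        exact lt_of_le_of_lt h1 h2
      have : (f i - e i) - ρ = 0 := eq_zero_of_dvd_of_degree_lt hgcd3 hdeglt
      have heqρ : f i - e i = ρ := by
        rw [sub_eq_zero] at this; exact this
      rw [← heqρ]
      exact hidvd
  -- conclude
  by_cases hzero : (a - b) - ρ = 0
  · have : a - b = ρ := by rwa [sub_eq_zero] at hzero
    rw [this]; exact hρdeg
  · exfalso
    -- degree bound
    have hlamM : (lam : WithBot ℕ) < (Finset.univ.lcm m).degree := by
      obtain ⟨i0, hi0⟩ : ∃ i0 : Fin L, i0 ≠ j := by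
        haveI : Nontrivial (Fin L) := Fin.nontrivial_iff_two_le.mpr hL
        exact exists_ne j
      have h1 : lam < (m j).natDegree :=
        lt_of_lt_of_le (htauj i0 hi0)
          (natDegree_le_of_dvd (gcd_dvd_right _ _) (hmne j))
      have h2 : (lam : WithBot ℕ) < (m j).degree := by
        rw [degree_eq_natDegree (hmne j)]
        exact_mod_cast h1
      exact lt_trans h2 (hm_lt j)
    have hdlt : ((a - b) - ρ).degree < (Finset.univ.lcm m).degree := by
      refine lt_of_le_of_lt (degree_sub_le _ _) (max_lt ?_ ?_)
      · exact lt_of_le_of_lt (degree_sub_le a b) (max_lt ha hb)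
      · exact lt_of_le_of_lt hρdeg hlamM
    have hsubB : (Finset.univ.filter fun i => ¬ m i ∣ ((a - b) - ρ)) ⊆ B := by
      intro i hi
      rw [Finset.mem_filter] at hi
      by_contra hiB
      exact hi.2 (hdvdall i hiB)
    have hcardle : (Finset.univ.filter fun i => ¬ m i ∣ ((a - b) - ρ)).card ≤ 2 * t :=
      le_trans (Finset.card_le_card hsubB) hBcard
    have hdle : d ≤ (Finset.univ.filter fun i => ¬ m i ∣ ((a - b) - ρ)).card := by
      rw [hd]
      exact Nat.sInf_le ⟨(a - b) - ρ, hzero, hdlt, rfl⟩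
    omega
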